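/- Let Σ be a connected tetravalent (X,2)-transitive graph, i.e. Σ has valency 4 and is (X,2)-arc-transitive but not (X,3)-arc-transitive. Then either Σ is isomorphic to the complete graph K₅, or Σ is a near n-gonal graph for some integer n ≥ 4. -/

import Mathlib

open Pointwise

/-- A 2-arc `(t.1, t.2.1, t.2.2)` of a simple graph. -/
def IsArc2 {V : Type*} (G : SimpleGraph V) (t : V × V × V) : Prop :=
  G.Adj t.1 t.2.1 ∧ G.Adj t.2.1 t.2.2 ∧ t.1 ≠ t.2.2

/-- A 3-arc `(t.1, t.2.1, t.2.2.1, t.2.2.2)` of a simple graph. -/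
def IsArc3 {V : Type*} (G : SimpleGraph V) (t : V × V × V × V) : Prop :=
  G.Adj t.1 t.2.1 ∧ G.Adj t.2.1 t.2.2.1 ∧ G.Adj t.2.2.1 t.2.2.2 ∧
    t.1 ≠ t.2.2.1 ∧ t.2.1 ≠ t.2.2.2

/-- The reverse of a 3-arc. -/
def rev3 {V : Type*} (t : V × V × V × V) : V × V × V × V :=
  (t.2.2.2, t.2.2.1, t.2.1, t.1)

/-- `G` is regular of valency `d`. -/
def Regular {V : Type*} (G : SimpleGraph V) (d : ℕ) : Prop :=
  ∀ u : V, (G.neighborSet u).ncard = d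

/-- The action of `X` preserves the adjacency of `G`. -/
def AdjPres (X : Type*) {V : Type*} [Group X] [MulAction X V] (G : SimpleGraph V) : Prop :=
  ∀ (x : X) (u w : V), G.Adj u w → G.Adj (x • u) (x • w)

/-- `X` is transitive on the vertices. -/
def VertexTrans (X V : Type*) [Group X] [MulAction X V] : Prop :=
  ∀ u w : V, ∃ x : X, x • u = w

/-- `X` is transitive on the arcs of `G`. -/
def ArcTrans (X : Type*) {V : Type*} [Group X] [MulAction X V] (G : SimpleGraph V) : Prop :=
  ∀ a b : V × V, G.Adj a.1 a.2 → G.Adj b.1 b.2 → ∃ x : X, x • a = b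

/-- `G` is `X`-symmetric. -/
def XSymm (X : Type*) {V : Type*} [Group X] [MulAction X V] (G : SimpleGraph V) : Prop :=
  AdjPres X G ∧ VertexTrans X V ∧ ArcTrans X G

/-- `X` is transitive on the 2-arcs of `G`. -/
def Arc2Trans (X : Type*) {V : Type*} [Group X] [MulAction X V] (G : SimpleGraph V) : Prop :=
  ∀ s t : V × V × V, IsArc2 G s → IsArc2 G t → ∃ x : X, x • s = t

/-- `X` is transitive on the 3-arcs of `G`. -/
def Arc3Trans (X : Type*) {V : Type*} [Group X] [MulAction X V] (G : SimpleGraph V) : Prop :=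
  ∀ s t : V × V × V × V, IsArc3 G s → IsArc3 G t → ∃ x : X, x • s = t

/-- `G` is `(X,2)`-arc-transitive. -/
def Arc2TransGraph (X : Type*) {V : Type*} [Group X] [MulAction X V] (G : SimpleGraph V) : Prop :=
  XSymm X G ∧ Arc2Trans X G

/-- `X` is regular on the 2-arcs of `G`, i.e. `G` is `(X,2)`-arc-regular
(together with `X`-symmetry). -/
def Arc2Reg (X : Type*) {V : Type*} [Group X] [MulAction X V] (G : SimpleGraph V) : Prop :=
  XSymm X G ∧ ∀ s t : V × V × V, IsArc2 G s → IsArc2 G t → ∃! x : X, x • s = t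

/-- `Δ` is a self-paired `X`-orbit on the set of 3-arcs of `G`. -/
def SelfPairedOrbit3 (X : Type*) {V : Type*} [Group X] [MulAction X V] (G : SimpleGraph V)
    (Δ : Set (V × V × V × V)) : Prop :=
  (∀ t ∈ Δ, IsArc3 G t) ∧ (∃ t₀ ∈ Δ, Δ = MulAction.orbit X t₀) ∧ ∀ t ∈ Δ, rev3 t ∈ Δ

/-- `ℓ₁(Δ) = k`:  for each `(τ₁,τ,σ,σ₁) ∈ Δ`, the orbit of `σ₁` under the pointwise
stabilizer of `(τ₁,τ,σ)` in `X` has exactly `k` elements. -/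
def Ell1Eq (X : Type*) {V : Type*} [Group X] [MulAction X V]
    (Δ : Set (V × V × V × V)) (k : ℕ) : Prop :=
  ∀ t ∈ Δ, ({u : V | ∃ x : X, x • t.1 = t.1 ∧ x • t.2.1 = t.2.1 ∧
    x • t.2.2.1 = t.2.2.1 ∧ x • t.2.2.2 = u}).ncard = k

/-- The arc set of the cycle traced by `c : ZMod n → V`. -/
def cycleArcSet {V : Type*} (n : ℕ) (c : ZMod n → V) : Set (V × V) :=
  {p | ∃ i : ZMod n, p = (c i, c (i + 1)) ∨ p = (c (i + 1), c i)}

/-- `S` is (the arc set of) an `n`-cycle of `G`. -/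
def IsNCycleSet {V : Type*} (G : SimpleGraph V) (n : ℕ) (S : Set (V × V)) : Prop :=
  ∃ c : ZMod n → V, Function.Injective c ∧ (∀ i, G.Adj (c i) (c (i + 1))) ∧ S = cycleArcSet n c

/-- The vertex set of a cycle given by its arc set. -/
def cycVerts {V : Type*} (S : Set (V × V)) : Set V := {u | ∃ w, (u, w) ∈ S}

/-- The 3-arcs of a cycle given by its arc set. -/
def cycArc3 {V : Type*} (S : Set (V × V)) : Set (V × V × V × V) :=
  {t | (t.1, t.2.1) ∈ S ∧ (t.2.1, t.2.2.1) ∈ S ∧ (t.2.2.1, t.2.2.2) ∈ S ∧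
    t.1 ≠ t.2.2.1 ∧ t.2.1 ≠ t.2.2.2}

/-- The disjoint union `mC_n` of `m` cycles of length `n`. -/
def mCycles (m n : ℕ) : SimpleGraph (Fin m × ZMod n) :=
  SimpleGraph.fromRel (fun p q => p.1 = q.1 ∧ q.2 = p.2 + 1)

/-- `E` is an `X`-orbit (on sets of arcs, e.g. on `n`-cycles). -/
def XOrbitOfArcSets (X : Type*) {V : Type*} [Group X] [MulAction X V]
    (E : Set (Set (V × V))) : Prop :=
  ∃ S₀ ∈ E, E = MulAction.orbit X S₀

/-- The permutation group induced on the vertex set of a cycle (with arc set `S`) by the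
setwise stabilizer in `X` of the cycle. -/
def inducedCyclePerms (X : Type*) {V : Type*} [Group X] [MulAction X V] (S : Set (V × V)) :
    Subgroup (Equiv.Perm ↥(cycVerts S)) where
  carrier := {e | ∃ x : X, x • S = S ∧ ∀ u : ↥(cycVerts S), (e u : V) = x • (u : V)}
  one_mem' := ⟨1, one_smul _ _, fun u => by simp⟩
  mul_mem' := by
    rintro e f ⟨x, hxS, hx⟩ ⟨y, hyS, hy⟩
    refine ⟨x * y, by rw [mul_smul, hyS, hxS], fun u => ?_⟩
    rw [Equiv.Perm.mul_apply, hx, hy, mul_smul]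
  inv_mem' := by
    rintro e ⟨x, hxS, hx⟩
    refine ⟨x⁻¹, inv_smul_eq_iff.mpr hxS.symm, fun u => ?_⟩
    have h := hx (e⁻¹ u)
    rw [Equiv.Perm.coe_inv, Equiv.apply_symm_apply] at h
    rw [eq_inv_smul_iff]
    exact h.symm

/-- `G` is a near `n`-gonal graph with respect to the set `E` of `n`-cycles. -/
def NearNGonal {V : Type*} (G : SimpleGraph V) (n : ℕ) (E : Set (Set (V × V))) : Prop :=
  G.Connected ∧ 4 ≤ G.girth ∧ (∀ S ∈ E, IsNCycleSet G n S) ∧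
    ∀ t : V × V × V, IsArc2 G t →
      ∃! S : Set (V × V), S ∈ E ∧ (t.1, t.2.1) ∈ S ∧ (t.2.1, t.2.2) ∈ S

section AuxBasic

variable {V X : Type*} [Group X] [MulAction X V] {G : SimpleGraph V}

lemma adjPres_iff (hAP : AdjPres X G) (x : X) {u w : V} :
    G.Adj (x • u) (x • w) ↔ G.Adj u w := by
  constructor
  · intro h
    have := hAP x⁻¹ _ _ h
    simpa using this
  · exact hAP x u w

lemma smul_triple (x : X) (a b c : V) : x • ((a, b, c) : V × V × V) = (x • a, x • b, x • c) := rfl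

lemma smul_quad (x : X) (a b c d : V) :
    x • ((a, b, c, d) : V × V × V × V) = (x • a, x • b, x • c, x • d) := rfl

lemma rev3_smul (x : X) (t : V × V × V × V) : rev3 (x • t) = x • rev3 t := rfl

lemma isArc2_smul (hAP : AdjPres X G) (x : X) {s : V × V × V} (h : IsArc2 G s) :
    IsArc2 G (x • s) := by
  obtain ⟨h1, h2, h3⟩ := h
  exact ⟨hAP x _ _ h1, hAP x _ _ h2, fun he => h3 (MulAction.injective x he)⟩

lemma isArc3_smul (hAP : AdjPres X G) (x : X) {t : V × V × V × V} (h : IsArc3 G t) :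
    IsArc3 G (x • t) := by
  obtain ⟨h1, h2, h3, h4, h5⟩ := h
  exact ⟨hAP x _ _ h1, hAP x _ _ h2, hAP x _ _ h3,
    fun he => h4 (MulAction.injective x he), fun he => h5 (MulAction.injective x he)⟩

end AuxBasic
set_option linter.unusedSectionVars false
section K5

variable {V X : Type*} [Fintype V] [Group X] [MulAction X V] {G : SimpleGraph V}

lemma adj_of_two_arc (hAP : AdjPres X G) (h2t : Arc2Trans X G)
    (htri : ∃ a b c : V, G.Adj a b ∧ G.Adj b c ∧ G.Adj a c) :
    ∀ s : V × V × V, IsArc2 G s → G.Adj s.1 s.2.2 := by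
  obtain ⟨a, b, c, hab, hbc, hac⟩ := htri
  intro s hs
  have harc : IsArc2 G (a, b, c) := ⟨hab, hbc, hac.ne⟩
  obtain ⟨x, hx⟩ := h2t s (a, b, c) hs harc
  have h1 : x • s.1 = a := congrArg Prod.fst hx
  have h2 : x • s.2.2 = c := congrArg (fun p => p.2.2) hx
  rw [← h1, ← h2] at hac
  exact (adjPres_iff hAP x).mp hac

lemma k5_case (hreg : Regular G 4) (hconn : G.Connected) (hAP : AdjPres X G)
    (h2t : Arc2Trans X G)
    (htri : ∃ a b c : V, G.Adj a b ∧ G.Adj b c ∧ G.Adj a c) :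
    Nonempty (G ≃g (⊤ : SimpleGraph (Fin 5))) := by
  classical
  have key := adj_of_two_arc hAP h2t htri
  have hcomp : ∀ u w : V, u ≠ w → G.Adj u w := by
    have main : ∀ (u w : V) (p : G.Walk u w), u = w ∨ G.Adj u w := by
      intro u w p
      induction p with
      | nil => exact Or.inl rfl
      | @cons u v w h q ih =>
        rcases ih with rfl | hvw
        · exact Or.inr h
        · by_cases huw : u = w
          · exact Or.inl huw
          · exact Or.inr (key (u, v, w) ⟨h, hvw, huw⟩)
    intro u w hne
    obtain ⟨p⟩ := hconn.preconnected u w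
    exact (main u w p).resolve_left hne
  obtain ⟨u⟩ := hconn.nonempty
  have huniv : (Set.univ : Set V) = insert u (G.neighborSet u) := by
    ext w
    simp only [Set.mem_univ, Set.mem_insert_iff, SimpleGraph.mem_neighborSet, true_iff]
    by_cases h : w = u
    · exact Or.inl h
    · exact Or.inr (hcomp u w (Ne.symm h))
  have hcard : Fintype.card V = 5 := by
    have h1 : (Set.univ : Set V).ncard = Fintype.card V := by
      rw [Set.ncard_univ, Nat.card_eq_fintype_card]
    rw [huniv, Set.ncard_insert_of_notMem (by simp) (Set.toFinite _), hreg u] at h1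
    omega
  have e : V ≃ Fin 5 := Fintype.equivFinOfCardEq (by simp [hcard])
  refine ⟨{ toEquiv := e, map_rel_iff' := ?_ }⟩
  intro a b
  simp only [SimpleGraph.top_adj, ne_eq, EmbeddingLike.apply_eq_iff_eq]
  constructor
  · exact fun h => hcomp a b h
  · exact fun h => h.ne

lemma girth_ge_four (hreg : Regular G 4) (hconn : G.Connected)
    (htf : ∀ a b c : V, G.Adj a b → G.Adj b c → ¬ G.Adj a c) : 4 ≤ G.girth := by
  classical
  have hdeg : ∀ v : V, G.degree v = 4 := by
    intro v
    have := hreg v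
    rw [Set.ncard_eq_toFinset_card'] at this
    rwa [← G.card_neighborSet_eq_degree, ← Set.toFinset_card]
  have hnac : ¬ G.IsAcyclic := by
    intro hac
    have htree : G.IsTree := ⟨hconn, hac⟩
    have hcard := htree.card_edgeFinset
    have hsum := G.sum_degrees_eq_twice_card_edges
    rw [Finset.sum_congr rfl (fun v _ => hdeg v), Finset.sum_const, Finset.card_univ,
      smul_eq_mul] at hsum
    have hpos : 1 ≤ Fintype.card V := Fintype.card_pos_iff.mpr hconn.nonempty
    omega
  obtain ⟨a, w, hcyc, hlen⟩ := SimpleGraph.exists_girth_eq_length.mpr hnac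
  rw [hlen]
  by_contra h4
  have h3 := hcyc.three_le_length
  have hlen3 : w.length = 3 := by omega
  cases w with
  | nil => simp at hlen3
  | cons h p =>
    cases p with
    | nil => simp at hlen3
    | cons h2 q =>
      cases q with
      | nil => simp at hlen3
      | cons h3' r =>
        cases r with
        | cons h4' r2 => simp [SimpleGraph.Walk.length_cons] at hlen3
        | nil => exact htf _ _ _ h h2 h3'.symm

end K5
section WalkConstr

variable {V X : Type*} [Fintype V] [Group X] [MulAction X V] {G : SimpleGraph V}

lemma near_polygonal_of_orbit (hreg : Regular G 4) (hconn : G.Connected)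
    (hAP : AdjPres X G) (h2t : Arc2Trans X G)
    (htf : ∀ a b c : V, G.Adj a b → G.Adj b c → ¬ G.Adj a c)
    (Δ : Set (V × V × V × V))
    (hΔ3 : ∀ t ∈ Δ, IsArc3 G t)
    (hΔinv : ∀ (x : X) (t : V × V × V × V), t ∈ Δ → x • t ∈ Δ)
    (hΔrev : ∀ t ∈ Δ, rev3 t ∈ Δ)
    (hex : ∀ s : V × V × V, IsArc2 G s → ∃! d : V, (s.1, s.2.1, s.2.2, d) ∈ Δ)
    (s₀ : V × V × V) (hs₀ : IsArc2 G s₀) :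
    ∃ (n : ℕ) (E : Set (Set (V × V))), 4 ≤ n ∧ NearNGonal G n E := by
  classical
  set F : V × V × V → V × V × V :=
    fun s => if h : IsArc2 G s then (s.2.1, s.2.2, (hex s h).exists.choose) else s with hF
  -- basic properties of F
  have hmem : ∀ s : V × V × V, IsArc2 G s → (s.1, s.2.1, s.2.2, (F s).2.2) ∈ Δ := by
    intro s h
    simp only [hF, dif_pos h]
    exact (hex s h).exists.choose_spec
  have hform : ∀ s : V × V × V, IsArc2 G s → (F s).1 = s.2.1 ∧ (F s).2.1 = s.2.2 := by
    intro s h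
    simp [hF, dif_pos h]
  have hFeq : ∀ (s : V × V × V) (d : V), IsArc2 G s → (s.1, s.2.1, s.2.2, d) ∈ Δ →
      F s = (s.2.1, s.2.2, d) := by
    intro s d h hd
    have h1 := hmem s h
    have h2 := (hex s h).unique h1 hd
    have h3 := hform s h
    rw [← h2]
    exact Prod.ext h3.1 (Prod.ext h3.2 rfl)
  have harc2F : ∀ s : V × V × V, IsArc2 G s → IsArc2 G (F s) := by
    intro s h
    have h1 := hΔ3 _ (hmem s h)
    obtain ⟨-, a2, a3, -, a5⟩ := h1
    obtain ⟨e1, e2⟩ := hform s h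
    exact ⟨by rw [e1, e2]; exact a2, by rw [e2]; exact a3, by rw [e1]; exact a5⟩
  have harc2it : ∀ (k : ℕ) (s : V × V × V), IsArc2 G s → IsArc2 G (F^[k] s) := by
    intro k
    induction k with
    | zero => intro s h; exact h
    | succ k ih =>
      intro s h
      rw [Function.iterate_succ_apply]
      exact ih _ (harc2F s h)
  have hsmul : ∀ (x : X) (s : V × V × V), IsArc2 G s → F (x • s) = x • F s := by
    intro x s h
    have h2 : IsArc2 G (x • s) := isArc2_smul hAP x h
    have h3 : ((x • s).1, (x • s).2.1, (x • s).2.2, x • (F s).2.2) ∈ Δ := by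
      have := hΔinv x _ (hmem s h)
      exact this
    have h4 := hFeq (x • s) (x • (F s).2.2) h2 h3
    rw [h4]
    obtain ⟨e1, e2⟩ := hform s h
    have : x • F s = (x • (F s).1, x • (F s).2.1, x • (F s).2.2) := rfl
    rw [this, e1, e2]
    rfl
  have hsmulit : ∀ (k : ℕ) (x : X) (s : V × V × V), IsArc2 G s →
      F^[k] (x • s) = x • F^[k] s := by
    intro k
    induction k with
    | zero => intro x s _; rfl
    | succ k ih =>
      intro x s h
      rw [Function.iterate_succ_apply, Function.iterate_succ_apply, hsmul x s h,
        ih x (F s) (harc2F s h)]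
  -- injectivity of F on 2-arcs
  have hFinj : ∀ s s' : V × V × V, IsArc2 G s → IsArc2 G s' → F s = F s' → s = s' := by
    intro s s' h h' he
    obtain ⟨e1, e2⟩ := hform s h
    obtain ⟨e1', e2'⟩ := hform s' h'
    have q1 : s.2.1 = s'.2.1 := by rw [← e1, ← e1', he]
    have q2 : s.2.2 = s'.2.2 := by rw [← e2, ← e2', he]
    have q3 : (F s).2.2 = (F s').2.2 := by rw [he]
    have m1 := hmem s h
    have m2 := hmem s' h'
    rw [← q1, ← q2, ← q3] at m2
    have r1 := hΔrev _ m1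
    have r2 := hΔrev _ m2
    have harc : IsArc2 G ((F s).2.2, s.2.2, s.2.1) := by
      obtain ⟨a1, a2, a3, a4, a5⟩ := hΔ3 _ m1
      exact ⟨a3.symm, a2.symm, fun hh => a5 hh.symm⟩
    have := (hex _ harc).unique r1 r2
    have : s.1 = s'.1 := this
    exact Prod.ext this (Prod.ext q1 q2)
  -- cancellation of iterates
  have hcancel : ∀ (k : ℕ) (s s' : V × V × V), IsArc2 G s → IsArc2 G s' →
      F^[k] s = F^[k] s' → s = s' := by
    intro k
    induction k with
    | zero => intro s s' _ _ h; exact h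
    | succ k ih =>
      intro s s' h h' he
      rw [Function.iterate_succ_apply, Function.iterate_succ_apply] at he
      exact hFinj s s' h h' (ih _ _ (harc2F s h) (harc2F s' h') he)
  -- existence of a period
  have hperiod : ∃ m : ℕ, 0 < m ∧ F^[m] s₀ = s₀ := by
    have : ¬ Function.Injective (fun k : ℕ => F^[k] s₀) := by
      intro hinj
      have := Finite.exists_ne_map_eq_of_infinite (fun k : ℕ => F^[k] s₀)
      obtain ⟨a, b, hab, he⟩ := this
      exact hab (hinj he)
    rw [Function.not_injective_iff] at this
    obtain ⟨i, j, hij, hne⟩ := this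
    rcases Nat.lt_or_ge i j with hlt | hge
    · refine ⟨j - i, by omega, ?_⟩
      have : F^[i + (j - i)] s₀ = F^[i] (F^[j - i] s₀) := Function.iterate_add_apply F i (j - i) s₀
      rw [show i + (j - i) = j by omega] at this
      have h2 : F^[i] (F^[j - i] s₀) = F^[i] s₀ := by rw [← this, hij]
      exact hcancel i _ _ (harc2it _ _ hs₀) hs₀ h2
    · have hlt : j < i := by omega
      refine ⟨i - j, by omega, ?_⟩
      have : F^[j + (i - j)] s₀ = F^[j] (F^[i - j] s₀) := Function.iterate_add_apply F j (i - j) s₀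
      rw [show j + (i - j) = i by omega] at this
      have h2 : F^[j] (F^[i - j] s₀) = F^[j] s₀ := by rw [← this, hij]
      exact hcancel j _ _ (harc2it _ _ hs₀) hs₀ h2
  obtain ⟨n, hnpos, hnfix, hnmin⟩ :
      ∃ n : ℕ, 0 < n ∧ F^[n] s₀ = s₀ ∧ ∀ m : ℕ, 0 < m → m < n → ¬ F^[m] s₀ = s₀ :=
    ⟨Nat.find hperiod, (Nat.find_spec hperiod).1, (Nat.find_spec hperiod).2,
      fun m hm hlt hfix => (Nat.find_min hperiod hlt) ⟨hm, hfix⟩⟩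
  -- all 2-arcs have period n
  have hper : ∀ s : V × V × V, IsArc2 G s → F^[n] s = s := by
    intro s hs
    obtain ⟨x, hx⟩ := h2t s₀ s hs₀ hs
    rw [← hx, hsmulit n x s₀ hs₀, hnfix]
  have hmul : ∀ (q : ℕ) (s : V × V × V), IsArc2 G s → F^[n * q] s = s := by
    intro q
    induction q with
    | zero => intro s _; rfl
    | succ q ih =>
      intro s hs
      have : n * (q + 1) = n * q + n := by ring
      rw [this, Function.iterate_add_apply, hper s hs, ih s hs]
  have hWmod : ∀ (k : ℕ) (s : V × V × V), IsArc2 G s → F^[k] s = F^[k % n] s := by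
    intro k s hs
    conv_lhs => rw [show k = k % n + n * (k / n) from (Nat.mod_add_div k n).symm]
    rw [Function.iterate_add_apply, hmul _ s hs]
  -- first components
  have hfst1 : ∀ s : V × V × V, IsArc2 G s → (F s).1 = s.2.1 := fun s h => (hform s h).1
  have hfst2 : ∀ s : V × V × V, IsArc2 G s → (F (F s)).1 = s.2.2 := by
    intro s h
    rw [(hform (F s) (harc2F s h)).1, (hform s h).2]
  have htrip : ∀ s : V × V × V, IsArc2 G s → s = (s.1, (F s).1, (F (F s)).1) := by
    intro s h
    rw [hfst1 s h, hfst2 s h]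
  -- n is at least 4
  have hn4 : 4 ≤ n := by
    obtain ⟨a1, a2, a3⟩ := id hs₀
    have hne1 : n ≠ 1 := by
      intro h
      rw [h] at hnfix
      have : (F^[1] s₀).1 = s₀.1 := by rw [hnfix]
      rw [Function.iterate_one, hfst1 s₀ hs₀] at this
      exact a1.ne' this
    have hne2 : n ≠ 2 := by
      intro h
      rw [h] at hnfix
      have : (F^[2] s₀).1 = s₀.1 := by rw [hnfix]
      rw [show F^[2] s₀ = F (F s₀) from rfl, hfst2 s₀ hs₀] at this
      exact a3 this.symm
    have hne3 : n ≠ 3 := by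
      intro h
      rw [h] at hnfix
      have h1 : (F^[3] s₀).1 = s₀.1 := by rw [hnfix]
      have h2 : F^[3] s₀ = F (F (F s₀)) := rfl
      rw [h2, hfst2 (F s₀) (harc2F s₀ hs₀)] at h1
      -- (F s₀).2.2 = s₀.1, but Adj s₀.2.2 (F s₀).2.2
      have h3 := hΔ3 _ (hmem s₀ hs₀)
      have h4 : G.Adj s₀.2.2 (F s₀).2.2 := h3.2.2.1
      rw [h1] at h4
      exact htf s₀.1 s₀.2.1 s₀.2.2 a1 a2 h4.symm
    omega
  haveI : NeZero n := ⟨by omega⟩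
  -- transport lemma : a closed walk anywhere closes everywhere
  have hT : ∀ (m : ℕ) (s : V × V × V), IsArc2 G s → (F^[m] s).1 = s.1 →
      ∀ s' : V × V × V, IsArc2 G s' → F^[m] s' = s' := by
    intro m s hs h1 s' hs'
    have hall : ∀ s'' : V × V × V, IsArc2 G s'' → (F^[m] s'').1 = s''.1 := by
      intro s'' hs''
      obtain ⟨x, hx⟩ := h2t s s'' hs hs''
      rw [← hx, hsmulit m x s hs]
      show x • (F^[m] s).1 = x • s.1
      rw [h1]
    have e0 := hall s' hs'
    have e1 : (F^[m] (F s')).1 = (F s').1 := hall _ (harc2F s' hs')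
    have e2 : (F^[m] (F (F s'))).1 = (F (F s')).1 := hall _ (harc2F _ (harc2F s' hs'))
    have ht' := htrip (F^[m] s') (harc2it m s' hs')
    rw [ht']
    have c1 : (F (F^[m] s')).1 = (F s').1 := by
      rw [← Function.iterate_succ_apply' F m s', Function.iterate_succ_apply F m s', e1]
    have c2 : (F (F (F^[m] s'))).1 = (F (F s')).1 := by
      have q1 : F (F (F^[m] s')) = F^[m + 2] s' := by
        rw [show m + 2 = (m + 1) + 1 by omega, Function.iterate_succ_apply' F (m+1) s',
          Function.iterate_succ_apply' F m s']
      have q2 : F^[m + 2] s' = F^[m] (F (F s')) := by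
        rw [show m + 2 = m + 2 from rfl, Function.iterate_add_apply F m 2 s']
        rfl
      rw [q1, q2, e2]
    rw [e0, c1, c2]
    exact (htrip s' hs').symm
  have hdvd : ∀ m : ℕ, F^[m] s₀ = s₀ → n ∣ m := by
    intro m hm
    have h1 : F^[m % n] s₀ = s₀ := by rw [← hWmod m s₀ hs₀, hm]
    have hlt : m % n < n := Nat.mod_lt m hnpos
    by_cases h0 : m % n = 0
    · exact Nat.dvd_of_mod_eq_zero h0
    · exact absurd h1 (hnmin _ (Nat.pos_of_ne_zero h0) hlt)
  have hall_dvd : ∀ (m : ℕ) (s : V × V × V), IsArc2 G s → (F^[m] s).1 = s.1 → n ∣ m :=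
    fun m s hs h => hdvd m (hT m s hs h s₀ hs₀)
  -- the cycle map
  set cS : (V × V × V) → ZMod n → V := fun s i => (F^[i.val] s).1 with hcS
  have hvali : ∀ i : ZMod n, ((i.val : ℕ) : ZMod n) = i := fun i => ZMod.natCast_rightInverse i
  have hccast : ∀ (s : V × V × V), IsArc2 G s → ∀ k : ℕ, cS s (k : ZMod n) = (F^[k] s).1 := by
    intro s hs k
    show (F^[((k : ZMod n)).val] s).1 = _
    rw [ZMod.val_natCast, ← hWmod k s hs]
  have hsucc : ∀ (s : V × V × V), IsArc2 G s → ∀ i : ZMod n,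
      cS s (i + 1) = (F^[i.val + 1] s).1 := by
    intro s hs i
    conv_lhs => rw [← hvali i]
    rw [← Nat.cast_add_one, hccast s hs]
  have hfcongr : ∀ (s : V × V × V), IsArc2 G s → ∀ a b : ℕ, a % n = b % n →
      F^[a] s = F^[b] s := by
    intro s hs a b h
    rw [hWmod a s hs, hWmod b s hs, h]
  have hinj : ∀ (s : V × V × V), IsArc2 G s → Function.Injective (cS s) := by
    intro s hs
    have aux : ∀ a b : ℕ, a ≤ b → (F^[a] s).1 = (F^[b] s).1 → a % n = b % n := by
      intro a b hab he
      have h2 : F^[b] s = F^[b - a] (F^[a] s) := by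
        rw [← Function.iterate_add_apply, show b - a + a = b by omega]
      rw [h2] at he
      have h3 : n ∣ (b - a) := hall_dvd (b - a) (F^[a] s) (harc2it a s hs) he.symm
      obtain ⟨q, hq⟩ := h3
      have hb : b = a + n * q := by omega
      rw [hb, Nat.add_mul_mod_self_left]
    intro i j h
    have h' : (F^[i.val] s).1 = (F^[j.val] s).1 := h
    have hiv := ZMod.val_lt i
    have hjv := ZMod.val_lt j
    have hi : i.val % n = i.val := Nat.mod_eq_of_lt hiv
    have hj : j.val % n = j.val := Nat.mod_eq_of_lt hjv
    have : i.val = j.val := by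
      rcases le_total i.val j.val with hle | hle
      · have := aux _ _ hle h'
        omega
      · have := aux _ _ hle h'.symm
        omega
    rw [← hvali i, ← hvali j, this]
  have hadj : ∀ (s : V × V × V), IsArc2 G s → ∀ i : ZMod n, G.Adj (cS s i) (cS s (i + 1)) := by
    intro s hs i
    rw [hsucc s hs i]
    show G.Adj (F^[i.val] s).1 _
    rw [Function.iterate_succ_apply' F i.val s, hfst1 _ (harc2it i.val s hs)]
    exact (harc2it i.val s hs).1
  have hcdef : ∀ (s : V × V × V) (i : ZMod n), cS s i = (F^[i.val] s).1 := fun _ _ => rfl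
  -- generic index congruence
  have hcongrW : ∀ (s : V × V × V), IsArc2 G s → ∀ a b : ℕ,
      (F^[a] s).1 = (F^[b] s).1 → a % n = b % n := by
    intro s hs
    have aux : ∀ a b : ℕ, a ≤ b → (F^[a] s).1 = (F^[b] s).1 → a % n = b % n := by
      intro a b hab he
      have h2 : F^[b] s = F^[b - a] (F^[a] s) := by
        rw [← Function.iterate_add_apply, show b - a + a = b by omega]
      rw [h2] at he
      have h3 : n ∣ (b - a) := hall_dvd (b - a) (F^[a] s) (harc2it a s hs) he.symm
      obtain ⟨q, hq⟩ := h3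
      have hb : b = a + n * q := by omega
      rw [hb, Nat.add_mul_mod_self_left]
    intro a b h
    rcases le_total a b with hle | hle
    · exact aux a b hle h
    · exact (aux b a hle h.symm).symm
  -- description of the arc set of the cycle of a 2-arc
  have hARC : ∀ (s : V × V × V), IsArc2 G s → cycleArcSet n (cS s) =
      {p : V × V | ∃ k : ℕ, p = ((F^[k] s).1, (F^[k+1] s).1) ∨
        p = ((F^[k+1] s).1, (F^[k] s).1)} := by
    intro s hs
    ext p
    constructor
    · rintro ⟨i, hi | hi⟩
      · exact ⟨i.val, Or.inl (by rw [hi, hsucc s hs i, hcdef])⟩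
      · exact ⟨i.val, Or.inr (by rw [hi, hsucc s hs i, hcdef])⟩
    · rintro ⟨k, hk | hk⟩
      · refine ⟨(k : ZMod n), Or.inl ?_⟩
        have e1 : cS s ((k : ZMod n) + 1) = (F^[k+1] s).1 := by
          rw [← Nat.cast_add_one]
          exact hccast s hs (k+1)
        rw [hk, hccast s hs k, e1]
      · refine ⟨(k : ZMod n), Or.inr ?_⟩
        have e1 : cS s ((k : ZMod n) + 1) = (F^[k+1] s).1 := by
          rw [← Nat.cast_add_one]
          exact hccast s hs (k+1)
        rw [hk, hccast s hs k, e1]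
  -- the two arcs of a 2-arc lie on its cycle
  have hpairA : ∀ (s : V × V × V), IsArc2 G s → (s.1, s.2.1) ∈ cycleArcSet n (cS s) := by
    intro s hs
    rw [hARC s hs]
    refine ⟨0, Or.inl ?_⟩
    have : (F^[0+1] s).1 = s.2.1 := by
      show (F s).1 = s.2.1
      exact hfst1 s hs
    rw [this]
    rfl
  have hpairB : ∀ (s : V × V × V), IsArc2 G s → (s.2.1, s.2.2) ∈ cycleArcSet n (cS s) := by
    intro s hs
    rw [hARC s hs]
    refine ⟨1, Or.inl ?_⟩
    have e1 : (F^[1] s).1 = s.2.1 := hfst1 s hs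
    have e2 : (F^[1+1] s).1 = s.2.2 := hfst2 s hs
    rw [e1, e2]
  -- shifting a 2-arc along its walk does not change the cycle
  have hshift : ∀ (s : V × V × V), IsArc2 G s →
      cycleArcSet n (cS (F s)) = cycleArcSet n (cS s) := by
    intro s hs
    rw [hARC _ (harc2F s hs), hARC s hs]
    have he : ∀ j : ℕ, F^[j] (F s) = F^[j+1] s := fun j =>
      (Function.iterate_succ_apply F j s).symm
    ext p
    constructor
    · rintro ⟨k, hk | hk⟩
      · exact ⟨k+1, Or.inl (by rw [hk, he k, he (k+1)])⟩
      · exact ⟨k+1, Or.inr (by rw [hk, he k, he (k+1)])⟩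
    · rintro ⟨k, hk | hk⟩
      · refine ⟨k + (n-1), Or.inl ?_⟩
        rw [he (k + (n-1)), he (k + (n-1) + 1),
          show k + (n-1) + 1 = k + n by omega]
        rw [hfcongr s hs (k + n) k (by rw [Nat.add_mod_right]),
          hfcongr s hs (k + n + 1) (k+1)
            (by rw [show k + n + 1 = (k+1) + n by omega, Nat.add_mod_right])]
        exact hk
      · refine ⟨k + (n-1), Or.inr ?_⟩
        rw [he (k + (n-1)), he (k + (n-1) + 1),
          show k + (n-1) + 1 = k + n by omega]
        rw [hfcongr s hs (k + n) k (by rw [Nat.add_mod_right]),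
          hfcongr s hs (k + n + 1) (k+1)
            (by rw [show k + n + 1 = (k+1) + n by omega, Nat.add_mod_right])]
        exact hk
  have hshiftIter : ∀ (j : ℕ) (s : V × V × V), IsArc2 G s →
      cycleArcSet n (cS (F^[j] s)) = cycleArcSet n (cS s) := by
    intro j
    induction j with
    | zero => intro s _; rfl
    | succ j ih =>
      intro s hs
      rw [Function.iterate_succ_apply F j s, ih (F s) (harc2F s hs), hshift s hs]
  -- reversal of 2-arcs
  set r2 : V × V × V → V × V × V := fun s => (s.2.2, s.2.1, s.1) with hr2def
  have hr2c : ∀ a : V × V × V, r2 a = (a.2.2, a.2.1, a.1) := fun _ => rfl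
  have hr2r2 : ∀ a : V × V × V, r2 (r2 a) = a := fun _ => rfl
  have hr2arc : ∀ s : V × V × V, IsArc2 G s → IsArc2 G (r2 s) := by
    intro s hs
    exact ⟨hs.2.1.symm, hs.1.symm, fun h => hs.2.2 h.symm⟩
  have hrev1 : ∀ s : V × V × V, IsArc2 G s → F (r2 (F s)) = r2 s := by
    intro s hs
    have hm := hmem s hs
    have h3 := hΔ3 _ hm
    have key : r2 (F s) = ((F s).2.2, s.2.2, s.2.1) := by
      rw [hr2c, (hform s hs).1, (hform s hs).2]
    have harc : IsArc2 G ((F s).2.2, s.2.2, s.2.1) :=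
      ⟨h3.2.2.1.symm, h3.2.1.symm, fun h => h3.2.2.2.2 h.symm⟩
    have hmem2 : ((F s).2.2, s.2.2, s.2.1, s.1) ∈ Δ := hΔrev _ hm
    rw [key, hFeq ((F s).2.2, s.2.2, s.2.1) s.1 harc hmem2, hr2c]
  have hu : ∀ (k : ℕ) (s : V × V × V), IsArc2 G s → F^[k] (r2 (F^[k] s)) = r2 s := by
    intro k
    induction k with
    | zero => intro s _; rfl
    | succ k ih =>
      intro s hs
      calc F^[k+1] (r2 (F^[k+1] s)) = F^[k] (F (r2 (F (F^[k] s)))) := by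
            rw [Function.iterate_succ_apply F k (r2 (F^[k+1] s)),
              Function.iterate_succ_apply' F k s]
        _ = F^[k] (r2 (F^[k] s)) := by rw [hrev1 (F^[k] s) (harc2it k s hs)]
        _ = r2 s := ih s hs
  have hrevwalk : ∀ (j : ℕ), j ≤ n → ∀ s : V × V × V, IsArc2 G s →
      F^[j] (r2 s) = r2 (F^[n - j] s) := by
    intro j hj s hs
    rcases Nat.eq_or_lt_of_le hj with rfl | hlt
    · rw [Nat.sub_self]
      exact hper _ (hr2arc s hs)
    · have h1 : r2 s = F^[n-j] (r2 (F^[n-j] s)) := (hu (n-j) s hs).symm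
      conv_lhs => rw [h1]
      rw [← Function.iterate_add_apply, show j + (n-j) = n by omega,
        hper _ (hr2arc _ (harc2it (n-j) s hs))]
  -- r2 component helper
  have ht2 : ∀ (l : ℕ) (s : V × V × V), IsArc2 G s → (r2 (F^[l] s)).1 = (F^[l+2] s).1 := by
    intro l s hs
    show (F^[l] s).2.2 = _
    have e : F^[l+2] s = F (F (F^[l] s)) := by
      rw [show l + 2 = (l+1)+1 by omega, Function.iterate_succ_apply' F (l+1) s,
        Function.iterate_succ_apply' F l s]
    rw [e]
    exact (hfst2 (F^[l] s) (harc2it l s hs)).symm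
  -- reversing does not change the cycle
  have hrevSub : ∀ s : V × V × V, IsArc2 G s →
      cycleArcSet n (cS (r2 s)) ⊆ cycleArcSet n (cS s) := by
    intro s hs p hp
    rw [hARC _ (hr2arc s hs)] at hp
    rw [hARC s hs]
    obtain ⟨k, hk⟩ := hp
    have hlt0 : k % n < n := Nat.mod_lt k hnpos
    obtain ⟨j, hjdef⟩ : ∃ j : ℕ, j = k % n := ⟨k % n, rfl⟩
    have hjlt : j < n := by omega
    have hjk : k % n = j % n := by
      rw [hjdef, Nat.mod_eq_of_lt hlt0]
    have hjk1 : (k+1) % n = (j+1) % n := by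
      rw [Nat.add_mod k 1 n, Nat.add_mod j 1 n, hjdef, Nat.mod_eq_of_lt hlt0]
    obtain ⟨m, hmdef⟩ : ∃ m : ℕ, m = n - j - 1 := ⟨_, rfl⟩
    have hr2s := hr2arc s hs
    have a1 : (F^[k] (r2 s)).1 = (F^[m+3] s).1 := by
      rw [hfcongr (r2 s) hr2s k j hjk,
        hrevwalk j (by omega) s hs, ht2 (n-j) s hs, show n - j + 2 = m + 3 by omega]
    have a2 : (F^[k+1] (r2 s)).1 = (F^[m+2] s).1 := by
      rw [hfcongr (r2 s) hr2s (k+1) (j+1) hjk1,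
        hrevwalk (j+1) (by omega) s hs, ht2 (n-(j+1)) s hs,
        show n - (j+1) + 2 = m + 2 by omega]
    rcases hk with hk | hk
    · refine ⟨m+2, Or.inr ?_⟩
      rw [hk, a1, a2, show m + 2 + 1 = m + 3 by omega]
    · refine ⟨m+2, Or.inl ?_⟩
      rw [hk, a1, a2, show m + 2 + 1 = m + 3 by omega]
  have hrevS : ∀ s : V × V × V, IsArc2 G s →
      cycleArcSet n (cS (r2 s)) = cycleArcSet n (cS s) := by
    intro s hs
    refine Set.Subset.antisymm (hrevSub s hs) ?_
    have := hrevSub (r2 s) (hr2arc s hs)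
    rwa [hr2r2 s] at this
  -- triple description of iterates
  have hktrip : ∀ (l : ℕ) (s : V × V × V), IsArc2 G s →
      F^[l] s = ((F^[l] s).1, (F^[l+1] s).1, (F^[l+2] s).1) := by
    intro l s hs
    have h1 := htrip (F^[l] s) (harc2it l s hs)
    rw [← Function.iterate_succ_apply' F l s] at h1
    rw [show l + 2 = (l+1)+1 by omega, Function.iterate_succ_apply' F (l+1) s]
    exact h1
  -- final assembly
  refine ⟨n, {S | ∃ s : V × V × V, IsArc2 G s ∧ S = cycleArcSet n (cS s)}, hn4,
    hconn, girth_ge_four hreg hconn htf, ?_, ?_⟩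
  · rintro S ⟨s, hs, rfl⟩
    exact ⟨cS s, hinj s hs, hadj s hs, rfl⟩
  · intro t ht
    refine ⟨cycleArcSet n (cS t), ⟨⟨t, ht, rfl⟩, hpairA t ht, hpairB t ht⟩, ?_⟩
    rintro S ⟨⟨s, hs, rfl⟩, hm1, hm2⟩
    obtain ⟨ha1, ha2, ha3⟩ := id ht
    rw [hARC s hs] at hm1 hm2
    obtain ⟨k, hk⟩ := hm1
    obtain ⟨l, hl⟩ := hm2
    rcases hk with hk | hk <;> rcases hl with hl | hl
    · -- forward-forward
      have e1 : t.1 = (F^[k] s).1 := congrArg (fun p : V × V => p.1) hk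
      have e2 : t.2.1 = (F^[k+1] s).1 := congrArg (fun p : V × V => p.2) hk
      have e3 : t.2.1 = (F^[l] s).1 := congrArg (fun p : V × V => p.1) hl
      have e4 : t.2.2 = (F^[l+1] s).1 := congrArg (fun p : V × V => p.2) hl
      have hm : (k+1) % n = l % n := hcongrW s hs _ _ (e2.symm.trans e3)
      have hm2' : (l+1) % n = (k+2) % n := by
        have h5 := Nat.ModEq.add_right 1 (show Nat.ModEq n l (k+1) from hm.symm)
        have h6 : l + 1 ≡ k + 2 [MOD n] := by
          rwa [show k + 1 + 1 = k + 2 by omega] at h5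
        exact h6
      have e4' : t.2.2 = (F^[k+2] s).1 := by rw [e4, hfcongr s hs (l+1) (k+2) hm2']
      have ht' : t = F^[k] s := by
        rw [hktrip k s hs, ← e1, ← e2, ← e4']
      rw [ht']
      exact (hshiftIter k s hs).symm
    · -- forward-backward : impossible
      exfalso
      have e1 : t.1 = (F^[k] s).1 := congrArg (fun p : V × V => p.1) hk
      have e2 : t.2.1 = (F^[k+1] s).1 := congrArg (fun p : V × V => p.2) hk
      have e3 : t.2.1 = (F^[l+1] s).1 := congrArg (fun p : V × V => p.1) hl
      have e4 : t.2.2 = (F^[l] s).1 := congrArg (fun p : V × V => p.2) hl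
      have hm : (k+1) % n = (l+1) % n := hcongrW s hs _ _ (e2.symm.trans e3)
      have hm' : k % n = l % n :=
        Nat.ModEq.add_right_cancel' 1 (show Nat.ModEq n (k+1) (l+1) from hm)
      have : t.2.2 = t.1 := by
        rw [e4, hfcongr s hs l k hm'.symm, ← e1]
      exact ha3 this.symm
    · -- backward-forward : impossible
      exfalso
      have e1 : t.1 = (F^[k+1] s).1 := congrArg (fun p : V × V => p.1) hk
      have e2 : t.2.1 = (F^[k] s).1 := congrArg (fun p : V × V => p.2) hk
      have e3 : t.2.1 = (F^[l] s).1 := congrArg (fun p : V × V => p.1) hl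
      have e4 : t.2.2 = (F^[l+1] s).1 := congrArg (fun p : V × V => p.2) hl
      have hm : k % n = l % n := hcongrW s hs _ _ (e2.symm.trans e3)
      have hm1 : (l+1) % n = (k+1) % n :=
        Nat.ModEq.add_right 1 (show Nat.ModEq n l k from hm.symm)
      have : t.2.2 = t.1 := by
        rw [e4, hfcongr s hs (l+1) (k+1) hm1, ← e1]
      exact ha3 this.symm
    · -- backward-backward
      have e1 : t.1 = (F^[k+1] s).1 := congrArg (fun p : V × V => p.1) hk
      have e2 : t.2.1 = (F^[k] s).1 := congrArg (fun p : V × V => p.2) hk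
      have e3 : t.2.1 = (F^[l+1] s).1 := congrArg (fun p : V × V => p.1) hl
      have e4 : t.2.2 = (F^[l] s).1 := congrArg (fun p : V × V => p.2) hl
      have hm : k % n = (l+1) % n := hcongrW s hs _ _ (e2.symm.trans e3)
      have hm1 : (k+1) % n = (l+2) % n := by
        have h5 := Nat.ModEq.add_right 1 (show Nat.ModEq n k (l+1) from hm)
        rwa [show l + 1 + 1 = l + 2 by omega] at h5
      have e1' : t.1 = (F^[l+2] s).1 := by rw [e1, hfcongr s hs (k+1) (l+2) hm1]
      have hr2t : r2 t = F^[l] s := by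
        rw [hr2c, e4, e3, e1', ← hktrip l s hs]
      have h1 : cycleArcSet n (cS (r2 t)) = cycleArcSet n (cS s) := by
        rw [hr2t]
        exact hshiftIter l s hs
      have h2 := hrevS t ht
      rw [← h1, h2]

end WalkConstr
section OrbitSelect

set_option maxHeartbeats 1000000

variable {V X : Type*} [Fintype V] [Group X] [MulAction X V] {G : SimpleGraph V}

lemma exists_good_orbit (hreg : Regular G 4) (hAP : AdjPres X G) (h2t : Arc2Trans X G)
    (hnot3 : ¬ Arc3Trans X G) (a b c : V) (hs₀ : IsArc2 G (a, b, c)) :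
    ∃ Δ : Set (V × V × V × V),
      (∀ t ∈ Δ, IsArc3 G t) ∧ (∀ (x : X) (t : V × V × V × V), t ∈ Δ → x • t ∈ Δ) ∧
      (∀ t ∈ Δ, rev3 t ∈ Δ) ∧
      (∀ s : V × V × V, IsArc2 G s → ∃! d : V, (s.1, s.2.1, s.2.2, d) ∈ Δ) := by
  classical
  obtain ⟨hab, hbc, hac⟩ := hs₀
  have hrr : ∀ z : V × V × V × V, rev3 (rev3 z) = z := fun _ => rfl
  have harc3 : ∀ d : V, G.Adj c d → d ≠ b → IsArc3 G (a, b, c, d) :=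
    fun d h1 h2 => ⟨hab, hbc, h1, hac, fun h => h2 h.symm⟩
  have horb3 : ∀ d : V, G.Adj c d → d ≠ b →
      ∀ t ∈ MulAction.orbit X ((a, b, c, d) : V × V × V × V), IsArc3 G t := by
    rintro d h1 h2 t ⟨x, rfl⟩
    exact isArc3_smul hAP x (harc3 d h1 h2)
  have horbinv : ∀ (z : V × V × V × V) (x : X) (t : V × V × V × V),
      t ∈ MulAction.orbit X z → x • t ∈ MulAction.orbit X z := by
    rintro z x t ⟨y, rfl⟩
    exact ⟨x * y, mul_smul x y z⟩
  set rel : V → V → Prop :=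
    fun d e => ((a, b, c, e) : V × V × V × V) ∈ MulAction.orbit X ((a, b, c, d) : V × V × V × V)
    with hreldef
  have hrefl : ∀ d, rel d d := fun d => MulAction.mem_orbit_self _
  have horbeq : ∀ d e, rel d e →
      MulAction.orbit X ((a, b, c, e) : V × V × V × V) = MulAction.orbit X (a, b, c, d) := by
    rintro d e ⟨x, hx⟩
    rw [← hx, MulAction.orbit_smul]
  have hsymm : ∀ d e, rel d e → rel e d := by
    intro d e h
    show ((a, b, c, d) : V × V × V × V) ∈ MulAction.orbit X ((a, b, c, e) : V × V × V × V)
    rw [horbeq d e h]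
    exact MulAction.mem_orbit_self _
  have htrans : ∀ d e f, rel d e → rel e f → rel d f := by
    intro d e f h1 h2
    show ((a, b, c, f) : V × V × V × V) ∈ _
    rw [← horbeq d e h1]
    exact h2
  have hrelD : ∀ d e, G.Adj c d → d ≠ b → rel d e → G.Adj c e ∧ e ≠ b := by
    rintro d e h1 h2 ⟨x, hx⟩
    have hbb : x • b = b := congrArg (fun p : V × V × V × V => p.2.1) hx
    have hcc : x • c = c := congrArg (fun p : V × V × V × V => p.2.2.1) hx
    have hde : x • d = e := congrArg (fun p : V × V × V × V => p.2.2.2) hx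
    constructor
    · have := hAP x c d h1
      rwa [hcc, hde] at this
    · intro he
      exact h2 (MulAction.injective x ((hde.trans he).trans hbb.symm))
  -- the set of extensions has three elements
  have hD : (G.neighborSet c \ {b}).ncard = 3 := by
    have h1 : b ∈ G.neighborSet c := hbc.symm
    have h2 := hreg c
    have h3 := Set.ncard_diff_singleton_add_one h1 (Set.toFinite _)
    omega
  obtain ⟨d₁, d₂, d₃, h12, h13, h23, hDeq⟩ := Set.ncard_eq_three.mp hD
  have hmemD : ∀ g : V, (G.Adj c g ∧ g ≠ b) ↔ g ∈ G.neighborSet c \ {b} := by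
    intro g
    constructor
    · rintro ⟨u1, u2⟩; exact ⟨u1, u2⟩
    · rintro ⟨u1, u2⟩; exact ⟨u1, u2⟩
  have hDfull : ∀ g : V, G.Adj c g → g ≠ b → g = d₁ ∨ g = d₂ ∨ g = d₃ := by
    intro g hg1 hg2
    have : g ∈ G.neighborSet c \ {b} := (hmemD g).mp ⟨hg1, hg2⟩
    rw [hDeq] at this
    simpa using this
  have hd₁D : G.Adj c d₁ ∧ d₁ ≠ b := (hmemD d₁).mpr (by rw [hDeq]; simp)
  have hd₂D : G.Adj c d₂ ∧ d₂ ≠ b := (hmemD d₂).mpr (by rw [hDeq]; simp)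
  have hd₃D : G.Adj c d₃ ∧ d₃ ≠ b := (hmemD d₃).mpr (by rw [hDeq]; simp)
  -- not all three are related
  have hnotall : ¬ (rel d₁ d₂ ∧ rel d₁ d₃) := by
    rintro ⟨r12, r13⟩
    apply hnot3
    intro t t' ht ht'
    have norm : ∀ u : V × V × V × V, IsArc3 G u →
        ∃ (x : X) (e : V), G.Adj c e ∧ e ≠ b ∧ x • u = (a, b, c, e) := by
      intro u hu
      obtain ⟨x, hx⟩ := h2t (u.1, u.2.1, u.2.2.1) (a, b, c)
        ⟨hu.1, hu.2.1, hu.2.2.2.1⟩ ⟨hab, hbc, hac⟩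
      have e1 : x • u.1 = a := congrArg (fun p : V × V × V => p.1) hx
      have e2 : x • u.2.1 = b := congrArg (fun p : V × V × V => p.2.1) hx
      have e3 : x • u.2.2.1 = c := congrArg (fun p : V × V × V => p.2.2) hx
      refine ⟨x, x • u.2.2.2, ?_, ?_, ?_⟩
      · have := hAP x u.2.2.1 u.2.2.2 hu.2.2.1
        rwa [e3] at this
      · intro he
        exact hu.2.2.2.2 (MulAction.injective x (he.trans e2.symm)).symm
      · show (x • u.1, x • u.2.1, x • u.2.2.1, x • u.2.2.2) = _
        rw [e1, e2, e3]
    obtain ⟨x, e, he1, he2, hx⟩ := norm t ht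
    obtain ⟨y, f, hf1, hf2, hy⟩ := norm t' ht'
    have hall : ∀ g, G.Adj c g → g ≠ b → rel d₁ g := by
      intro g hg1 hg2
      rcases hDfull g hg1 hg2 with rfl | rfl | rfl
      · exact hrefl _
      · exact r12
      · exact r13
    have hef : rel e f := htrans e d₁ f (hsymm d₁ e (hall e he1 he2)) (hall f hf1 hf2)
    obtain ⟨z, hz⟩ := hef
    have hz2 : z • ((a, b, c, e) : V × V × V × V) = (a, b, c, f) := hz
    refine ⟨y⁻¹ * z * x, ?_⟩
    rw [mul_smul, mul_smul, hx, hz2, ← hy, inv_smul_smul]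
  -- counting: orbit size determines class size
  set A2f : Finset (V × V × V) := Finset.univ.filter (fun s => IsArc2 G s) with hA2f
  have hs0mem : ((a, b, c) : V × V × V) ∈ A2f := by
    rw [hA2f, Finset.mem_filter]
    exact ⟨Finset.mem_univ _, hab, hbc, hac⟩
  have hN2pos : 0 < A2f.card := Finset.card_pos.mpr ⟨_, hs0mem⟩
  have hcount : ∀ d, G.Adj c d → d ≠ b →
      (MulAction.orbit X ((a, b, c, d) : V × V × V × V)).ncard
        = A2f.card * ({e | rel d e}).ncard := by
    intro d h1 h2
    rw [Set.ncard_eq_toFinset_card _ (Set.toFinite _)]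
    have hmap : ∀ t ∈ (Set.toFinite (MulAction.orbit X ((a, b, c, d) : V × V × V × V))).toFinset,
        (t.1, t.2.1, t.2.2.1) ∈ A2f := by
      intro t htm
      rw [Set.Finite.mem_toFinset] at htm
      have h3 := horb3 d h1 h2 t htm
      rw [hA2f, Finset.mem_filter]
      exact ⟨Finset.mem_univ _, h3.1, h3.2.1, h3.2.2.2.1⟩
    rw [Finset.card_eq_sum_card_fiberwise hmap]
    have hfib : ∀ s ∈ A2f,
        ((Set.toFinite (MulAction.orbit X ((a, b, c, d) : V × V × V × V))).toFinset.filter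
          (fun t => (t.1, t.2.1, t.2.2.1) = s)).card = ({e | rel d e}).ncard := by
      intro s hsm
      rw [hA2f, Finset.mem_filter] at hsm
      obtain ⟨-, hs2⟩ := hsm
      obtain ⟨x, hx⟩ := h2t (a, b, c) s ⟨hab, hbc, hac⟩ hs2
      have b1 : x • a = s.1 := congrArg (fun p : V × V × V => p.1) hx
      have b2 : x • b = s.2.1 := congrArg (fun p : V × V × V => p.2.1) hx
      have b3 : x • c = s.2.2 := congrArg (fun p : V × V × V => p.2.2) hx
      have himg : (Set.toFinite (MulAction.orbit X ((a, b, c, d) : V × V × V × V))).toFinset.filter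
            (fun t => (t.1, t.2.1, t.2.2.1) = s)
          = ((Set.toFinite ({e | rel d e})).toFinset).image
              (fun e => (s.1, s.2.1, s.2.2, x • e)) := by
        ext t
        rw [Finset.mem_filter, Finset.mem_image, Set.Finite.mem_toFinset]
        constructor
        · rintro ⟨htm, hts⟩
          have c1 : t.1 = s.1 := congrArg (fun p : V × V × V => p.1) hts
          have c2 : t.2.1 = s.2.1 := congrArg (fun p : V × V × V => p.2.1) hts
          have c3 : t.2.2.1 = s.2.2 := congrArg (fun p : V × V × V => p.2.2) hts
          refine ⟨x⁻¹ • t.2.2.2, ?_, ?_⟩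
          · rw [Set.Finite.mem_toFinset]
            have h5 := horbinv _ x⁻¹ t htm
            have h6 : x⁻¹ • t = ((a, b, c, x⁻¹ • t.2.2.2) : V × V × V × V) := by
              show (x⁻¹ • t.1, x⁻¹ • t.2.1, x⁻¹ • t.2.2.1, x⁻¹ • t.2.2.2) = _
              rw [c1, c2, c3, ← b1, ← b2, ← b3, inv_smul_smul, inv_smul_smul, inv_smul_smul]
            rwa [h6] at h5
          · rw [smul_inv_smul, ← c1, ← c2, ← c3]
        · rintro ⟨e, hre, rfl⟩
          rw [Set.Finite.mem_toFinset] at hre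
          constructor
          · have h6 : ((s.1, s.2.1, s.2.2, x • e) : V × V × V × V) = x • (a, b, c, e) := by
              show _ = (x • a, x • b, x • c, x • e)
              rw [b1, b2, b3]
            rw [h6]
            exact horbinv _ x _ hre
          · rfl
      rw [himg, Finset.card_image_of_injective _
        (fun e e' h => MulAction.injective x
          (congrArg (fun p : V × V × V × V => p.2.2.2) h)),
        ← Set.ncard_eq_toFinset_card _ (Set.toFinite _)]
    rw [Finset.sum_congr rfl hfib, Finset.sum_const, smul_eq_mul]
  -- reversal of orbits
  have hrevimg : ∀ z : V × V × V × V,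
      rev3 '' (MulAction.orbit X z) = MulAction.orbit X (rev3 z) := by
    intro z
    ext t
    constructor
    · rintro ⟨u, ⟨y, rfl⟩, rfl⟩
      exact ⟨y, (rev3_smul y z).symm⟩
    · rintro ⟨y, rfl⟩
      exact ⟨y • z, ⟨y, rfl⟩, rev3_smul y z⟩
  have hrev3inj : Function.Injective (rev3 : V × V × V × V → V × V × V × V) :=
    Function.LeftInverse.injective (g := rev3) (fun t => rfl)
  have hrevpair : ∀ d, G.Adj c d → d ≠ b → ∃ d', (G.Adj c d' ∧ d' ≠ b) ∧
      MulAction.orbit X (rev3 ((a, b, c, d) : V × V × V × V))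
        = MulAction.orbit X ((a, b, c, d') : V × V × V × V) := by
    intro d h1 h2
    have harc' : IsArc2 G ((d, c, b) : V × V × V) := ⟨h1.symm, hbc.symm, h2⟩
    obtain ⟨x, hx⟩ := h2t (d, c, b) (a, b, c) harc' ⟨hab, hbc, hac⟩
    have e1 : x • d = a := congrArg (fun p : V × V × V => p.1) hx
    have e2 : x • c = b := congrArg (fun p : V × V × V => p.2.1) hx
    have e3 : x • b = c := congrArg (fun p : V × V × V => p.2.2) hx
    refine ⟨x • a, ⟨?_, ?_⟩, ?_⟩
    · have := hAP x b a hab.symm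
      rwa [e3] at this
    · intro h
      exact hac (MulAction.injective x (h.trans e2.symm))
    · have h6 : x • (rev3 ((a, b, c, d) : V × V × V × V)) = (a, b, c, x • a) := by
        show (x • d, x • c, x • b, x • a) = _
        rw [e1, e2, e3]
      rw [← h6, MulAction.orbit_smul]
  have hCC : ∀ d d', (G.Adj c d ∧ d ≠ b) → (G.Adj c d' ∧ d' ≠ b) →
      MulAction.orbit X (rev3 ((a, b, c, d) : V × V × V × V))
        = MulAction.orbit X ((a, b, c, d') : V × V × V × V) →
      ({e | rel d' e}).ncard = ({e | rel d e}).ncard := by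
    intro d d' hd hd' heq
    have h1 := hcount d hd.1 hd.2
    have h2 := hcount d' hd'.1 hd'.2
    have h3 : (MulAction.orbit X ((a, b, c, d') : V × V × V × V)).ncard
        = (MulAction.orbit X ((a, b, c, d) : V × V × V × V)).ncard := by
      rw [← heq, ← hrevimg, Set.ncard_image_of_injective _ hrev3inj]
    rw [h1, h2] at h3
    exact Nat.eq_of_mul_eq_mul_left hN2pos h3
  -- existence of a singleton class
  have hsingle : ∃ d, (G.Adj c d ∧ d ≠ b) ∧ ∀ e, rel d e → e = d := by
    by_contra hcon
    push_neg at hcon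
    obtain ⟨e₁, hre₁, hne₁⟩ := hcon d₁ hd₁D
    have he₁D := hrelD d₁ e₁ hd₁D.1 hd₁D.2 hre₁
    have h1213 : rel d₁ d₂ ∨ rel d₁ d₃ := by
      rcases hDfull e₁ he₁D.1 he₁D.2 with rfl | rfl | rfl
      · exact absurd rfl hne₁
      · exact Or.inl hre₁
      · exact Or.inr hre₁
    rcases h1213 with r12 | r13
    · obtain ⟨e₃, hre₃, hne₃⟩ := hcon d₃ hd₃D
      have he₃D := hrelD d₃ e₃ hd₃D.1 hd₃D.2 hre₃
      apply hnotall
      refine ⟨r12, ?_⟩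
      rcases hDfull e₃ he₃D.1 he₃D.2 with rfl | rfl | rfl
      · exact hsymm d₃ _ hre₃
      · exact htrans _ _ d₃ r12 (hsymm d₃ _ hre₃)
      · exact absurd rfl hne₃
    · obtain ⟨e₂, hre₂, hne₂⟩ := hcon d₂ hd₂D
      have he₂D := hrelD d₂ e₂ hd₂D.1 hd₂D.2 hre₂
      apply hnotall
      refine ⟨?_, r13⟩
      rcases hDfull e₂ he₂D.1 he₂D.2 with rfl | rfl | rfl
      · exact hsymm d₂ _ hre₂
      · exact absurd rfl hne₂
      · exact htrans _ _ d₂ r13 (hsymm d₂ _ hre₂)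
  obtain ⟨ds, hdsD, hds_sing⟩ := hsingle
  have hclseq : ∀ d, (∀ e, rel d e → e = d) → ({e | rel d e}) = {d} := by
    intro d hd
    ext e
    simp only [Set.mem_setOf_eq, Set.mem_singleton_iff]
    exact ⟨hd e, fun h => h ▸ hrefl d⟩
  have hsing_of_card : ∀ d, ({e | rel d e}).ncard = 1 → ∀ e, rel d e → e = d := by
    intro d hd e he
    obtain ⟨z, hz⟩ := Set.ncard_eq_one.mp hd
    have h1 : e ∈ ({e | rel d e} : Set V) := he
    have h2 : d ∈ ({e | rel d e} : Set V) := hrefl d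
    rw [hz] at h1 h2
    rw [Set.mem_singleton_iff] at h1 h2
    rw [h1, h2]
  obtain ⟨d', hd'D, heqrev⟩ := hrevpair ds hdsD.1 hdsD.2
  have hd'card : ({e | rel d' e}).ncard = 1 := by
    rw [hCC ds d' hdsD hd'D heqrev, hclseq ds hds_sing, Set.ncard_singleton]
  have hd'_sing : ∀ e, rel d' e → e = d' := hsing_of_card d' hd'card
  -- choose the good extension
  have hgood : ∃ dc, (G.Adj c dc ∧ dc ≠ b) ∧ (∀ e, rel dc e → e = dc) ∧
      rev3 ((a, b, c, dc) : V × V × V × V) ∈ MulAction.orbit X ((a, b, c, dc) : V × V × V × V) := by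
    by_cases hdd : d' = ds
    · refine ⟨ds, hdsD, hds_sing, ?_⟩
      rw [hdd] at heqrev
      rw [← heqrev]
      exact MulAction.mem_orbit_self _
    · -- find the third element
      have hthird : ∃ g, (G.Adj c g ∧ g ≠ b) ∧ g ≠ ds ∧ g ≠ d' ∧
          (∀ e, G.Adj c e → e ≠ b → e = ds ∨ e = d' ∨ e = g) := by
        rcases hDfull ds hdsD.1 hdsD.2 with h | h | h <;>
          rcases hDfull d' hd'D.1 hd'D.2 with h' | h' | h' <;> subst h <;> subst h'
        · exact absurd rfl hdd
        · exact ⟨d₃, hd₃D, h13.symm, h23.symm, fun e u1 u2 => by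
            rcases hDfull e u1 u2 with rfl | rfl | rfl
            · exact Or.inl rfl
            · exact Or.inr (Or.inl rfl)
            · exact Or.inr (Or.inr rfl)⟩
        · exact ⟨d₂, hd₂D, h12.symm, h23, fun e u1 u2 => by
            rcases hDfull e u1 u2 with rfl | rfl | rfl
            · exact Or.inl rfl
            · exact Or.inr (Or.inr rfl)
            · exact Or.inr (Or.inl rfl)⟩
        · exact ⟨d₃, hd₃D, h23.symm, h13.symm, fun e u1 u2 => by
            rcases hDfull e u1 u2 with rfl | rfl | rfl
            · exact Or.inr (Or.inl rfl)
            · exact Or.inl rfl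
            · exact Or.inr (Or.inr rfl)⟩
        · exact absurd rfl hdd
        · exact ⟨d₁, hd₁D, h12, h13, fun e u1 u2 => by
            rcases hDfull e u1 u2 with rfl | rfl | rfl
            · exact Or.inr (Or.inr rfl)
            · exact Or.inl rfl
            · exact Or.inr (Or.inl rfl)⟩
        · exact ⟨d₂, hd₂D, h23, h12.symm, fun e u1 u2 => by
            rcases hDfull e u1 u2 with rfl | rfl | rfl
            · exact Or.inr (Or.inl rfl)
            · exact Or.inr (Or.inr rfl)
            · exact Or.inl rfl⟩
        · exact ⟨d₁, hd₁D, h13, h12, fun e u1 u2 => by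
            rcases hDfull e u1 u2 with rfl | rfl | rfl
            · exact Or.inr (Or.inr rfl)
            · exact Or.inr (Or.inl rfl)
            · exact Or.inl rfl⟩
        · exact absurd rfl hdd
      obtain ⟨g, hgD, hg1, hg2, hgfull⟩ := hthird
      have hg_sing : ∀ e, rel g e → e = g := by
        intro e he
        have heD := hrelD g e hgD.1 hgD.2 he
        rcases hgfull e heD.1 heD.2 with rfl | rfl | rfl
        · exact absurd (hds_sing g (hsymm g e he)) hg1
        · exact absurd (hd'_sing g (hsymm g e he)) hg2
        · rfl
      obtain ⟨g', hg'D, heqg⟩ := hrevpair g hgD.1 hgD.2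
      have hds_rev : MulAction.orbit X ((a, b, c, ds) : V × V × V × V)
          = MulAction.orbit X (rev3 ((a, b, c, d') : V × V × V × V)) := by
        have := congrArg (fun S => rev3 '' S) heqrev
        simp only [hrevimg, hrr] at this
        exact this
      have hg'g : g' = g := by
        rcases hgfull g' hg'D.1 hg'D.2 with rfl | rfl | rfl
        · -- g' = ds : then orbit g = orbit d', contradiction
          exfalso
          have h7 := congrArg (fun S => rev3 '' S) heqg
          simp only [hrevimg, hrr] at h7
          rw [heqrev] at h7
          have h8 : rel d' g := by
            show ((a, b, c, g) : V × V × V × V) ∈ _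
            rw [← h7]
            exact MulAction.mem_orbit_self _
          exact hg2 (hd'_sing g h8)
        · -- g' = d' : then orbit g = orbit ds, contradiction
          exfalso
          have h7 := congrArg (fun S => rev3 '' S) heqg
          simp only [hrevimg, hrr] at h7
          rw [← hds_rev] at h7
          have h8 : rel ds g := by
            show ((a, b, c, g) : V × V × V × V) ∈ _
            rw [← h7]
            exact MulAction.mem_orbit_self _
          exact hg1 (hds_sing g h8)
        · rfl
      refine ⟨g, hgD, hg_sing, ?_⟩
      rw [hg'g] at heqg
      rw [← heqg]
      exact MulAction.mem_orbit_self _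
  obtain ⟨dc, hdcD, hdc_sing, hdc_rev⟩ := hgood
  refine ⟨MulAction.orbit X ((a, b, c, dc) : V × V × V × V),
    horb3 dc hdcD.1 hdcD.2, horbinv _, ?_, ?_⟩
  · rintro t ⟨y, rfl⟩
    rw [rev3_smul]
    exact horbinv _ y _ hdc_rev
  · intro s hs2
    obtain ⟨x, hx⟩ := h2t (a, b, c) s ⟨hab, hbc, hac⟩ hs2
    have b1 : x • a = s.1 := congrArg (fun p : V × V × V => p.1) hx
    have b2 : x • b = s.2.1 := congrArg (fun p : V × V × V => p.2.1) hx
    have b3 : x • c = s.2.2 := congrArg (fun p : V × V × V => p.2.2) hx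
    refine ⟨x • dc, ?_, ?_⟩
    · show ((s.1, s.2.1, s.2.2, x • dc) : V × V × V × V) ∈
        MulAction.orbit X ((a, b, c, dc) : V × V × V × V)
      have h6 : ((s.1, s.2.1, s.2.2, x • dc) : V × V × V × V) = x • (a, b, c, dc) := by
        show _ = (x • a, x • b, x • c, x • dc)
        rw [b1, b2, b3]
      rw [h6]
      exact horbinv _ x _ (MulAction.mem_orbit_self _)
    · intro e he
      have h5 := horbinv _ x⁻¹ _ he
      have h6 : x⁻¹ • ((s.1, s.2.1, s.2.2, e) : V × V × V × V) = (a, b, c, x⁻¹ • e) := by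
        show (x⁻¹ • s.1, x⁻¹ • s.2.1, x⁻¹ • s.2.2, x⁻¹ • e) = _
        rw [← b1, ← b2, ← b3, inv_smul_smul, inv_smul_smul, inv_smul_smul]
      rw [h6] at h5
      have h7 : x⁻¹ • e = dc := hdc_sing _ h5
      rw [← h7, smul_inv_smul]

end OrbitSelect
/-- A connected tetravalent `(X,2)`-transitive graph is either the
complete graph `K₅` or a near `n`-gonal graph for some `n ≥ 4`. -/
theorem tetravalent_arc2transitive_K5_or_nearNGonal {V X : Type*} [Fintype V] [Group X]
    [MulAction X V] (G : SimpleGraph V) (hreg : Regular G 4)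
    (hconn : G.Connected) (h2at : Arc2TransGraph X G) (hnot3 : ¬ Arc3Trans X G) :
    Nonempty (G ≃g (⊤ : SimpleGraph (Fin 5))) ∨
      ∃ (n : ℕ) (E : Set (Set (V × V))), 4 ≤ n ∧ NearNGonal G n E := by
  classical
  obtain ⟨⟨hAP, hVT, hAT⟩, h2t⟩ := h2at
  by_cases htri : ∃ a b c : V, G.Adj a b ∧ G.Adj b c ∧ G.Adj a c
  · exact Or.inl (k5_case hreg hconn hAP h2t htri)
  · right
    have htf : ∀ a b c : V, G.Adj a b → G.Adj b c → ¬ G.Adj a c :=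
      fun a b c h1 h2 h3 => htri ⟨a, b, c, h1, h2, h3⟩
    obtain ⟨u⟩ := hconn.nonempty
    have h1 : (G.neighborSet u).Nonempty := by
      apply Set.nonempty_of_ncard_ne_zero
      rw [hreg u]
      omega
    obtain ⟨v, hv⟩ := h1
    have h2 : ∃ w, G.Adj v w ∧ w ≠ u := by
      by_contra hcon
      push_neg at hcon
      have hsub : G.neighborSet v ⊆ {u} := fun w hw => hcon w hw
      have := Set.ncard_le_ncard hsub (Set.toFinite _)
      rw [hreg v, Set.ncard_singleton] at this
      omega
    obtain ⟨w, hw1, hw2⟩ := h2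
    have harc : IsArc2 G ((u, v, w) : V × V × V) := ⟨hv, hw1, fun h => hw2 h.symm⟩
    obtain ⟨Δ, p1, p2, p3, p4⟩ := exists_good_orbit hreg hAP h2t hnot3 u v w harc
    exact near_polygonal_of_orbit hreg hconn hAP h2t htf Δ p1 p2 p3 p4 (u, v, w) harc
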